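/- Let A be a unital C*-algebra, n ≥ 3 and k ≥ 1 integers, and p a family as in the context (a representation of Mor⁺(K_nᵏ, K_n)). Let T ⊆ S ⊆ Fin k. Let (𝐱, 𝐲), (𝐮, 𝐯), (𝐰, 𝐳) be pairs of tuples in Fin k → Fin n whose agreement sets {i : first(i) = second(i)} are exactly S, T, and S ∖ T respectively. Then Σ_{a ∈ Fin n} p(𝐱, a) p(𝐲, a) = Σ_{a ∈ Fin n} p(𝐮, a) p(𝐯, a) + Σ_{a ∈ Fin n} p(𝐰, a) p(𝐳, a); i.e., Π_S = Π_T + Π_{S∖T}. -/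
import Mathlib

namespace Stmt6Aux

open Finset

/-- In `Fin n` with `n ≥ 3`, there is an element different from two given ones. -/
lemma exists_ne_ne {n : ℕ} (hn : 3 ≤ n) (a b : Fin n) : ∃ c : Fin n, c ≠ a ∧ c ≠ b := by
  by_contra h
  push_neg at h
  have hsub : (Finset.univ : Finset (Fin n)) ⊆ {a, b} := by
    intro c _
    rcases eq_or_ne c a with rfl | hca
    · simp
    · simp [h c hca]
  have h1 := Finset.card_le_card hsub
  simp only [Finset.card_univ, Fintype.card_fin] at h1
  have h2 : n ≤ 2 := le_trans h1 (Finset.card_insert_le _ _ |>.trans (by simp))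
  omega

noncomputable def other {n : ℕ} (hn : 3 ≤ n) (a b : Fin n) : Fin n :=
  (exists_ne_ne hn a b).choose

lemma other_ne_left {n : ℕ} (hn : 3 ≤ n) (a b : Fin n) : other hn a b ≠ a :=
  (exists_ne_ne hn a b).choose_spec.1

lemma other_ne_right {n : ℕ} (hn : 3 ≤ n) (a b : Fin n) : other hn a b ≠ b :=
  (exists_ne_ne hn a b).choose_spec.2

lemma exists_perm2 {n : ℕ} (j0 j1 : Fin n) (hj : j0 ≠ j1) (a b : Fin n) (hab : a ≠ b) :
    ∃ π : Equiv.Perm (Fin n), π j0 = a ∧ π j1 = b := by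
  set b' := (Equiv.swap j0 a).symm b with hb'
  have hb'j0 : j0 ≠ b' := by
    rw [hb', Ne, eq_comm, Equiv.symm_apply_eq, Equiv.swap_apply_left]
    exact hab.symm
  refine ⟨(Equiv.swap j1 b').trans (Equiv.swap j0 a), ?_, ?_⟩
  · rw [Equiv.trans_apply, Equiv.swap_apply_of_ne_of_ne hj hb'j0, Equiv.swap_apply_left]
  · rw [Equiv.trans_apply, Equiv.swap_apply_left, hb', Equiv.apply_symm_apply]

lemma exists_perm3 {n : ℕ} (j0 j1 j2 : Fin n) (h01 : j0 ≠ j1) (h02 : j0 ≠ j2) (h12 : j1 ≠ j2)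
    (a b c : Fin n) (hab : a ≠ b) (hac : a ≠ c) (hbc : b ≠ c) :
    ∃ π : Equiv.Perm (Fin n), π j0 = a ∧ π j1 = b ∧ π j2 = c := by
  obtain ⟨τ, hτ0, hτ1⟩ := exists_perm2 j0 j1 h01 a b hab
  set c' := τ.symm c with hc'
  have hc'0 : j0 ≠ c' := by
    rw [hc', Ne, eq_comm, Equiv.symm_apply_eq, hτ0]; exact hac.symm
  have hc'1 : j1 ≠ c' := by
    rw [hc', Ne, eq_comm, Equiv.symm_apply_eq, hτ1]; exact hbc.symm
  refine ⟨(Equiv.swap j2 c').trans τ, ?_, ?_, ?_⟩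
  · rw [Equiv.trans_apply, Equiv.swap_apply_of_ne_of_ne h02 hc'0, hτ0]
  · rw [Equiv.trans_apply, Equiv.swap_apply_of_ne_of_ne h12 hc'1, hτ1]
  · rw [Equiv.trans_apply, Equiv.swap_apply_left, hc', Equiv.apply_symm_apply]

section Algebra

variable {A : Type*} [CStarAlgebra A] {n k : ℕ}
variable (p : (Fin k → Fin n) → Fin n → A)

/-- PVM orthogonality: distinct colors of the same projective measurement are orthogonal. -/
lemma orth (hidem : ∀ x a, p x a * p x a = p x a)
    (hsa : ∀ x a, star (p x a) = p x a)
    (hsum : ∀ x, ∑ a, p x a = 1) :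
    ∀ x (a b : Fin n), a ≠ b → p x a * p x b = 0 := by
  letI := CStarAlgebra.spectralOrder A
  haveI := CStarAlgebra.spectralOrderedRing A
  intro x a b hab
  have hpos : ∀ c, (0 : A) ≤ p x c := by
    intro c
    have h := star_mul_self_nonneg (p x c)
    rwa [hsa, hidem] at h
  have hconj : ∀ c, (0 : A) ≤ p x a * (p x c * p x a) := by
    intro c
    have h := star_left_conjugate_nonneg (hpos c) (p x a)
    rwa [hsa, mul_assoc] at h
  have hrest : ∑ c ∈ Finset.univ.erase a, p x c = 1 - p x a := by
    have h := hsum x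
    rw [← Finset.add_sum_erase _ _ (Finset.mem_univ a)] at h
    rw [← h]; abel
  have hsum0 : ∑ c ∈ Finset.univ.erase a, p x a * (p x c * p x a) = 0 := by
    calc ∑ c ∈ Finset.univ.erase a, p x a * (p x c * p x a)
        = p x a * ((∑ c ∈ Finset.univ.erase a, p x c) * p x a) := by
          rw [Finset.sum_mul, Finset.mul_sum]
      _ = p x a * ((1 - p x a) * p x a) := by rw [hrest]
      _ = 0 := by rw [sub_mul, one_mul, hidem, sub_self, mul_zero]
  have hterm : p x a * (p x b * p x a) = 0 := by
    have hmem : b ∈ Finset.univ.erase a := Finset.mem_erase.mpr ⟨hab.symm, Finset.mem_univ b⟩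
    exact (Finset.sum_eq_zero_iff_of_nonneg (fun c _ => hconj c)).mp hsum0 b hmem
  have hba : p x b * p x a = 0 := by
    have hz : star (p x b * p x a) * (p x b * p x a) = 0 := by
      rw [star_mul, hsa, hsa]
      calc p x a * p x b * (p x b * p x a)
          = p x a * ((p x b * p x b) * p x a) := by noncomm_ring
        _ = p x a * (p x b * p x a) := by rw [hidem]
        _ = 0 := hterm
    exact (CStarRing.star_mul_self_eq_zero_iff _).mp hz
  have := congrArg star hba
  rwa [star_mul, hsa, hsa, star_zero] at this

/-- Clique lemma: for `n` tuples that pairwise differ in every coordinate,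
the projections of any fixed color sum to `1`. -/
lemma clique_sum (hidem : ∀ x a, p x a * p x a = p x a)
    (hsa : ∀ x a, star (p x a) = p x a)
    (hsum : ∀ x, ∑ a, p x a = 1)
    (horth : ∀ x y a, (∀ i, x i ≠ y i) → p x a * p y a = 0)
    (c : Fin n → Fin k → Fin n) (hc : ∀ j j', j ≠ j' → ∀ i, c j i ≠ c j' i)
    (a : Fin n) : ∑ j, p (c j) a = 1 := by
  letI := CStarAlgebra.spectralOrder A
  haveI := CStarAlgebra.spectralOrderedRing A
  set Q : Fin n → A := fun b => ∑ j, p (c j) b with hQ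
  have hQidem : ∀ b, Q b * Q b = Q b := by
    intro b
    rw [hQ]
    simp only
    rw [Finset.sum_mul_sum]
    have hinner : ∀ j ∈ Finset.univ, ∑ j' ∈ Finset.univ, p (c j) b * p (c j') b = p (c j) b := by
      intro j _
      rw [Finset.sum_eq_single j]
      · exact hidem _ _
      · intro j' _ hj'
        exact horth _ _ _ (hc j j' (Ne.symm hj'))
      · intro h; exact absurd (Finset.mem_univ j) h
    rw [Finset.sum_congr rfl hinner]
  have hQsa : ∀ b, star (Q b) = Q b := by
    intro b
    rw [hQ]
    simp only
    rw [star_sum]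
    exact Finset.sum_congr rfl fun j _ => hsa _ _
  have hQnonneg : ∀ b, (0 : A) ≤ 1 - Q b := by
    intro b
    have hid : (1 - Q b) * (1 - Q b) = 1 - Q b := by
      rw [sub_mul, one_mul, mul_sub, mul_one, hQidem]; abel
    have h := star_mul_self_nonneg (1 - Q b)
    rwa [star_sub, star_one, hQsa, hid] at h
  have hsumQ : ∑ b, Q b = (n : ℕ) • (1 : A) := by
    rw [hQ]
    simp only
    rw [Finset.sum_comm]
    rw [Finset.sum_congr rfl (fun j _ => hsum (c j))]
    simp
  have h0 : ∑ b : Fin n, (1 - Q b) = 0 := by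
    rw [Finset.sum_sub_distrib, hsumQ]
    simp
  have hall := (Finset.sum_eq_zero_iff_of_nonneg (fun b _ => hQnonneg b)).mp h0 a (Finset.mem_univ a)
  have : Q a = 1 := by
    have := sub_eq_zero.mp hall
    exact this.symm
  exact this

/-- Summed clique lemma for the bilinear sums. -/
lemma clique_sumE (hidem : ∀ x a, p x a * p x a = p x a)
    (hsa : ∀ x a, star (p x a) = p x a)
    (hsum : ∀ x, ∑ a, p x a = 1)
    (horth : ∀ x y a, (∀ i, x i ≠ y i) → p x a * p y a = 0)
    (c : Fin n → Fin k → Fin n) (hc : ∀ j j', j ≠ j' → ∀ i, c j i ≠ c j' i)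
    (y : Fin k → Fin n) : ∑ j, ∑ a, p (c j) a * p y a = 1 := by
  rw [Finset.sum_comm]
  calc ∑ a, ∑ j, p (c j) a * p y a
      = ∑ a : Fin n, (∑ j, p (c j) a) * p y a := by
        exact Finset.sum_congr rfl fun a _ => (Finset.sum_mul _ _ _).symm
    _ = ∑ a, p y a := by
        refine Finset.sum_congr rfl fun a _ => ?_
        rw [clique_sum p hidem hsa hsum horth c hc a, one_mul]
    _ = 1 := hsum y

/-- Star of the bilinear sum. -/
lemma Estar (hsa : ∀ x a, star (p x a) = p x a) (v y : Fin k → Fin n) :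
    star (∑ a, p v a * p y a) = ∑ a, p y a * p v a := by
  rw [star_sum]
  refine Finset.sum_congr rfl fun a _ => ?_
  rw [star_mul, hsa, hsa]

variable (hn : 3 ≤ n)
variable (hidem : ∀ x a, p x a * p x a = p x a)
variable (hsa : ∀ x a, star (p x a) = p x a)
variable (hsum : ∀ x, ∑ a, p x a = 1)
variable (horth : ∀ x y a, (∀ i, x i ≠ y i) → p x a * p y a = 0)

include hn hidem hsa hsum horth

/-- Flip identity with two distinguished clique members. -/
lemma flip2 (v w y : Fin k → Fin n)
    (hvw : ∀ i, v i ≠ w i) (hy : ∀ i, y i = v i ∨ y i = w i) :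
    (∑ a, p v a * p y a) + (∑ a, p w a * p y a) = 1 := by
  have h3 : (3 : ℕ) ≤ n := hn
  set i0 : Fin n := ⟨0, by omega⟩ with hi0
  set i1 : Fin n := ⟨1, by omega⟩ with hi1
  have h01 : i0 ≠ i1 := by simp [hi0, hi1, Fin.ext_iff]
  have hex := fun i => exists_perm2 i0 i1 h01 (v i) (w i) (hvw i)
  choose π hπ0 hπ1 using hex
  set c : Fin n → Fin k → Fin n := fun j i => π i j with hcdef
  have hc : ∀ j j', j ≠ j' → ∀ i, c j i ≠ c j' i := by
    intro j j' hjj' i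
    exact fun h => hjj' ((π i).injective h)
  have htot := clique_sumE p hidem hsa hsum horth c hc y
  have hzero : ∀ j ∈ Finset.univ, j ∉ ({i0, i1} : Finset (Fin n)) →
      (∑ a, p (c j) a * p y a) = 0 := by
    intro j _ hj
    simp only [Finset.mem_insert, Finset.mem_singleton] at hj
    push_neg at hj
    have hfar : ∀ i, c j i ≠ y i := by
      intro i
      rcases hy i with h | h
      · rw [h, ← hπ0 i]
        exact fun hh => hj.1 ((π i).injective hh)
      · rw [h, ← hπ1 i]
        exact fun hh => hj.2 ((π i).injective hh)
    exact Finset.sum_eq_zero fun a _ => horth _ _ _ hfar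
  have hpair : ∑ j ∈ ({i0, i1} : Finset (Fin n)), (∑ a, p (c j) a * p y a) = 1 := by
    rw [Finset.sum_subset (Finset.subset_univ _) hzero]
    exact htot
  rw [Finset.sum_pair h01] at hpair
  have hc0 : c i0 = v := funext fun i => hπ0 i
  have hc1 : c i1 = w := funext fun i => hπ1 i
  rwa [hc0, hc1] at hpair

/-- Flip identity with three distinguished clique members. -/
lemma flip3 (v w u y : Fin k → Fin n)
    (hvw : ∀ i, v i ≠ w i) (hvu : ∀ i, v i ≠ u i) (hwu : ∀ i, w i ≠ u i)
    (hy : ∀ i, y i = v i ∨ y i = w i ∨ y i = u i) :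
    (∑ a, p v a * p y a) + (∑ a, p w a * p y a) + (∑ a, p u a * p y a) = 1 := by
  have h3 : (3 : ℕ) ≤ n := hn
  set i0 : Fin n := ⟨0, by omega⟩ with hi0
  set i1 : Fin n := ⟨1, by omega⟩ with hi1
  set i2 : Fin n := ⟨2, by omega⟩ with hi2
  have h01 : i0 ≠ i1 := by simp [hi0, hi1, Fin.ext_iff]
  have h02 : i0 ≠ i2 := by simp [hi0, hi2, Fin.ext_iff]
  have h12 : i1 ≠ i2 := by simp [hi1, hi2, Fin.ext_iff]
  have hex := fun i => exists_perm3 i0 i1 i2 h01 h02 h12 (v i) (w i) (u i)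
      (hvw i) (hvu i) (hwu i)
  choose π hπ0 hπ1 hπ2 using hex
  set c : Fin n → Fin k → Fin n := fun j i => π i j with hcdef
  have hc : ∀ j j', j ≠ j' → ∀ i, c j i ≠ c j' i := by
    intro j j' hjj' i
    exact fun h => hjj' ((π i).injective h)
  have htot := clique_sumE p hidem hsa hsum horth c hc y
  have hzero : ∀ j ∈ Finset.univ, j ∉ ({i0, i1, i2} : Finset (Fin n)) →
      (∑ a, p (c j) a * p y a) = 0 := by
    intro j _ hj
    simp only [Finset.mem_insert, Finset.mem_singleton] at hj
    push_neg at hj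
    have hfar : ∀ i, c j i ≠ y i := by
      intro i
      rcases hy i with h | h | h
      · rw [h, ← hπ0 i]; exact fun hh => hj.1 ((π i).injective hh)
      · rw [h, ← hπ1 i]; exact fun hh => hj.2.1 ((π i).injective hh)
      · rw [h, ← hπ2 i]; exact fun hh => hj.2.2 ((π i).injective hh)
    exact Finset.sum_eq_zero fun a _ => horth _ _ _ hfar
  have htriple : ∑ j ∈ ({i0, i1, i2} : Finset (Fin n)), (∑ a, p (c j) a * p y a) = 1 := by
    rw [Finset.sum_subset (Finset.subset_univ _) hzero]
    exact htot
  have hnotmem : i0 ∉ ({i1, i2} : Finset (Fin n)) := by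
    simp [h01, h02]
  rw [Finset.sum_insert hnotmem, Finset.sum_pair h12] at htriple
  have hc0 : c i0 = v := funext fun i => hπ0 i
  have hc1 : c i1 = w := funext fun i => hπ1 i
  have hc2 : c i2 = u := funext fun i => hπ2 i
  rw [hc0, hc1, hc2] at htriple
  rw [← add_assoc] at htriple
  exact htriple

/-- Well-definedness in the first argument. -/
lemma WD1 (α γ β : Fin k → Fin n) (h : ∀ i, α i = β i ↔ γ i = β i) :
    ∑ a, p α a * p β a = ∑ a, p γ a * p β a := by
  classical
  set ω : Fin k → Fin n := fun i => if α i = β i then other hn (β i) (β i) else β i with hω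
  have h1 : (∑ a, p α a * p β a) + (∑ a, p ω a * p β a) = 1 := by
    refine flip2 p hn hidem hsa hsum horth α ω β ?_ ?_
    · intro i
      by_cases hi : α i = β i
      · simp only [hω, if_pos hi]
        rw [hi]
        exact (other_ne_left hn (β i) (β i)).symm
      · simp only [hω, if_neg hi]
        exact hi
    · intro i
      by_cases hi : α i = β i
      · exact Or.inl hi.symm
      · right; simp only [hω, if_neg hi]
  have h2 : (∑ a, p γ a * p β a) + (∑ a, p ω a * p β a) = 1 := by
    refine flip2 p hn hidem hsa hsum horth γ ω β ?_ ?_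
    · intro i
      by_cases hi : α i = β i
      · have hγ : γ i = β i := (h i).mp hi
        simp only [hω, if_pos hi]
        rw [hγ]
        exact (other_ne_left hn (β i) (β i)).symm
      · have hγ : γ i ≠ β i := fun hh => hi ((h i).mpr hh)
        simp only [hω, if_neg hi]
        exact hγ
    · intro i
      by_cases hi : α i = β i
      · exact Or.inl ((h i).mp hi).symm
      · right; simp only [hω, if_neg hi]
  exact add_right_cancel (h1.trans h2.symm)

/-- Well-definedness in the second argument. -/
lemma WD2 (α β δ : Fin k → Fin n) (h : ∀ i, α i = β i ↔ α i = δ i) :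
    ∑ a, p α a * p β a = ∑ a, p α a * p δ a := by
  have h' : ∀ i, β i = α i ↔ δ i = α i := by
    intro i
    rw [eq_comm, @eq_comm _ (δ i)]
    exact h i
  have hwd := WD1 p hn hidem hsa hsum horth β δ α h'
  calc ∑ a, p α a * p β a = star (∑ a, p β a * p α a) := by
        rw [Estar p hsa]
    _ = star (∑ a, p δ a * p α a) := by rw [hwd]
    _ = ∑ a, p α a * p δ a := by rw [Estar p hsa]

/-- Full well-definedness: the bilinear sum depends only on the agreement set. -/
lemma WD (α β γ δ : Fin k → Fin n) (h : ∀ i, α i = β i ↔ γ i = δ i) :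
    ∑ a, p α a * p β a = ∑ a, p γ a * p δ a := by
  classical
  set ω : Fin k → Fin n := fun i => if α i = β i then other hn (β i) (δ i) else β i with hω
  set β' : Fin k → Fin n := fun i => if α i = β i then δ i else β i with hβ'
  set α' : Fin k → Fin n := fun i => if α i = β i then δ i else other hn (β i) (δ i) with hα'
  have e1 : (∑ a, p α a * p β a) + (∑ a, p ω a * p β a) = 1 := by
    refine flip2 p hn hidem hsa hsum horth α ω β ?_ ?_
    · intro i
      by_cases hi : α i = β i
      · simp only [hω, if_pos hi]
        rw [hi]
        exact fun hh => (other_ne_left hn (β i) (δ i)) hh.symm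
      · simp only [hω, if_neg hi]; exact hi
    · intro i
      by_cases hi : α i = β i
      · exact Or.inl hi.symm
      · right; simp only [hω, if_neg hi]
  have e2 : (∑ a, p ω a * p β a) = ∑ a, p ω a * p β' a := by
    refine WD2 p hn hidem hsa hsum horth ω β β' ?_
    intro i
    by_cases hi : α i = β i
    · simp only [hω, hβ', if_pos hi]
      constructor
      · intro hh; exact absurd hh (other_ne_left hn (β i) (δ i))
      · intro hh; exact absurd hh (other_ne_right hn (β i) (δ i))
    · simp only [hβ', if_neg hi]
  have e3 : (∑ a, p α' a * p β' a) + (∑ a, p ω a * p β' a) = 1 := by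
    refine flip2 p hn hidem hsa hsum horth α' ω β' ?_ ?_
    · intro i
      by_cases hi : α i = β i
      · simp only [hα', hω, if_pos hi]
        exact fun hh => (other_ne_right hn (β i) (δ i)) hh.symm
      · simp only [hα', hω, if_neg hi]
        exact other_ne_left hn (β i) (δ i)
    · intro i
      by_cases hi : α i = β i
      · left; simp only [hα', hβ', if_pos hi]
      · right; simp only [hω, hβ', if_neg hi]
  have e4 : (∑ a, p α' a * p β' a) = ∑ a, p α' a * p δ a := by
    refine WD2 p hn hidem hsa hsum horth α' β' δ ?_
    intro i
    by_cases hi : α i = β i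
    · simp only [hα', hβ', if_pos hi]
    · simp only [hα', hβ', if_neg hi]
      constructor
      · intro hh; exact absurd hh (other_ne_left hn (β i) (δ i))
      · intro hh; exact absurd hh (other_ne_right hn (β i) (δ i))
  have e5 : (∑ a, p α' a * p δ a) = ∑ a, p γ a * p δ a := by
    refine WD1 p hn hidem hsa hsum horth α' γ δ ?_
    intro i
    by_cases hi : α i = β i
    · have hγ : γ i = δ i := (h i).mp hi
      simp only [hα', if_pos hi]
      simp [hγ]
    · have hγ : γ i ≠ δ i := fun hh => hi ((h i).mpr hh)
      simp only [hα', if_neg hi]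
      constructor
      · intro hh; exact absurd hh (other_ne_right hn (β i) (δ i))
      · intro hh; exact absurd hh hγ
  have step1 : (∑ a, p α a * p β a) = ∑ a, p α' a * p β' a := by
    have hA := eq_sub_of_add_eq e1
    have hB := eq_sub_of_add_eq e3
    rw [hA, hB, e2]
  rw [step1, e4, e5]

end Algebra

end Stmt6Aux

/-- **Lemma (cool-projections (v)).** Let `A` be a unital C*-algebra, `n ≥ 3`, `k ≥ 1`,
and `p` a representation of `Mor⁺(K_nᵏ, K_n)`. Let `T ⊆ S ⊆ Fin k`, and let `(x,y)`,
`(u,v)`, `(w,z)` be pairs with agreement sets exactly `S`, `T`, `S \ T` respectively.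
Then `Π_S = Π_T + Π_{S\T}`. -/
theorem stmt6 {A : Type*} [CStarAlgebra A]
    (n k : ℕ) (hn : 3 ≤ n) (hk : 1 ≤ k)
    (p : (Fin k → Fin n) → Fin n → A)
    (hidem : ∀ x a, p x a * p x a = p x a)
    (hsa : ∀ x a, star (p x a) = p x a)
    (hsum : ∀ x, ∑ a, p x a = 1)
    (horth : ∀ x y a, (∀ i, x i ≠ y i) → p x a * p y a = 0)
    (S T : Finset (Fin k)) (hTS : T ⊆ S)
    (x y u v w z : Fin k → Fin n)
    (hxy : ∀ i, x i = y i ↔ i ∈ S)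
    (huv : ∀ i, u i = v i ↔ i ∈ T)
    (hwz : ∀ i, w i = z i ↔ i ∈ S \ T) :
    ∑ a, p x a * p y a = (∑ a, p u a * p v a) + ∑ a, p w a * p z a := by
  classical
  open Stmt6Aux in
  -- auxiliary values distinct from y i
  set b : Fin k → Fin n := fun i => Stmt6Aux.other hn (y i) (y i) with hb
  set c : Fin k → Fin n := fun i => Stmt6Aux.other hn (y i) (b i) with hc
  have hby : ∀ i, b i ≠ y i := fun i => Stmt6Aux.other_ne_left hn (y i) (y i)
  have hcy : ∀ i, c i ≠ y i := fun i => Stmt6Aux.other_ne_left hn (y i) (b i)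
  have hcb : ∀ i, c i ≠ b i := fun i => Stmt6Aux.other_ne_right hn (y i) (b i)
  -- the three clique members
  set v1 : Fin k → Fin n := fun i => if i ∈ T then y i else b i with hv1
  set v2 : Fin k → Fin n := fun i => if i ∈ S \ T then y i else if i ∈ T then b i else c i with hv2
  set v3 : Fin k → Fin n := fun i => if i ∈ S then c i else y i with hv3
  -- membership case analysis helpers
  have hcases : ∀ i : Fin k, (i ∈ T ∧ i ∈ S) ∨ (i ∈ S \ T ∧ i ∉ T ∧ i ∈ S) ∨ (i ∉ S ∧ i ∉ T ∧ i ∉ S \ T) := by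
    intro i
    by_cases hiT : i ∈ T
    · exact Or.inl ⟨hiT, hTS hiT⟩
    · by_cases hiS : i ∈ S
      · exact Or.inr (Or.inl ⟨Finset.mem_sdiff.mpr ⟨hiS, hiT⟩, hiT, hiS⟩)
      · exact Or.inr (Or.inr ⟨hiS, hiT, fun hh => hiS (Finset.mem_sdiff.mp hh).1⟩)
  -- flip3 : E v1 y + E v2 y + E v3 y = 1
  have F3 : (∑ a, p v1 a * p y a) + (∑ a, p v2 a * p y a) + (∑ a, p v3 a * p y a) = 1 := by
    refine Stmt6Aux.flip3 p hn hidem hsa hsum horth v1 v2 v3 y ?_ ?_ ?_ ?_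
    · intro i
      rcases hcases i with ⟨hT, hS⟩ | ⟨hST, hT, hS⟩ | ⟨hS, hT, hST⟩
      · have hST : i ∉ S \ T := fun hh => (Finset.mem_sdiff.mp hh).2 hT
        simp only [hv1, hv2, if_pos hT, if_neg hST]
        exact (hby i).symm
      · simp only [hv1, hv2, if_pos hST, if_neg hT]
        exact hby i
      · simp only [hv1, hv2, if_neg hT, if_neg hST]
        exact fun hh => (hcb i) hh.symm
    · intro i
      rcases hcases i with ⟨hT, hS⟩ | ⟨hST, hT, hS⟩ | ⟨hS, hT, hST⟩
      · simp only [hv1, hv3, if_pos hT, if_pos hS]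
        exact (hcy i).symm
      · simp only [hv1, hv3, if_neg hT, if_pos hS]
        exact fun hh => (hcb i) hh.symm
      · simp only [hv1, hv3, if_neg hT, if_neg hS]
        exact hby i
    · intro i
      rcases hcases i with ⟨hT, hS⟩ | ⟨hST, hT, hS⟩ | ⟨hS, hT, hST⟩
      · have hST : i ∉ S \ T := fun hh => (Finset.mem_sdiff.mp hh).2 hT
        simp only [hv2, hv3, if_neg hST, if_pos hT, if_pos hS]
        exact fun hh => (hcb i) hh.symm
      · simp only [hv2, hv3, if_pos hST, if_pos hS]
        exact (hcy i).symm
      · simp only [hv2, hv3, if_neg hST, if_neg hT, if_neg hS]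
        exact hcy i
    · intro i
      rcases hcases i with ⟨hT, hS⟩ | ⟨hST, hT, hS⟩ | ⟨hS, hT, hST⟩
      · have hST : i ∉ S \ T := fun hh => (Finset.mem_sdiff.mp hh).2 hT
        left; simp only [hv1, if_pos hT]
      · right; left; simp only [hv2, if_pos hST]
      · right; right; simp only [hv3, if_neg hS]
  -- flip2 : E x y + E v3 y = 1
  have F2 : (∑ a, p x a * p y a) + (∑ a, p v3 a * p y a) = 1 := by
    refine Stmt6Aux.flip2 p hn hidem hsa hsum horth x v3 y ?_ ?_
    · intro i
      by_cases hiS : i ∈ S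
      · have hxi : x i = y i := (hxy i).mpr hiS
        simp only [hv3, if_pos hiS]
        rw [hxi]
        exact fun hh => (hcy i) hh.symm
      · have hxi : x i ≠ y i := fun hh => hiS ((hxy i).mp hh)
        simp only [hv3, if_neg hiS]
        exact hxi
    · intro i
      by_cases hiS : i ∈ S
      · left; exact ((hxy i).mpr hiS).symm
      · right; simp only [hv3, if_neg hiS]
  -- well-definedness transfers
  have W1 : (∑ a, p v1 a * p y a) = ∑ a, p u a * p v a := by
    refine Stmt6Aux.WD p hn hidem hsa hsum horth v1 y u v ?_
    intro i
    by_cases hiT : i ∈ T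
    · simp only [hv1, if_pos hiT]
      simp [huv i, hiT]
    · simp only [hv1, if_neg hiT]
      constructor
      · intro hh; exact absurd hh (hby i)
      · intro hh; exact absurd ((huv i).mp hh) hiT
  have W2 : (∑ a, p v2 a * p y a) = ∑ a, p w a * p z a := by
    refine Stmt6Aux.WD p hn hidem hsa hsum horth v2 y w z ?_
    intro i
    by_cases hiST : i ∈ S \ T
    · simp only [hv2, if_pos hiST]
      simp [hwz i, hiST]
    · simp only [hv2, if_neg hiST]
      constructor
      · intro hh
        by_cases hiT : i ∈ T
        · rw [if_pos hiT] at hh; exact absurd hh (hby i)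
        · rw [if_neg hiT] at hh; exact absurd hh (hcy i)
      · intro hh; exact absurd ((hwz i).mp hh) hiST
  -- combine
  have key : (∑ a, p x a * p y a) = (∑ a, p v1 a * p y a) + (∑ a, p v2 a * p y a) :=
    add_right_cancel (F2.trans F3.symm)
  rw [key, W1, W2]
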